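/- Let n_s ≥ 2, ω_1,…,ω_{n_s} distinct reals with minimal gap Δ_min > 0, ε ≤ Δ_min/(2n_s), and let Q = [Q_{ij}] and X = [X_{ij}] be block matrices of m×m complex blocks satisfying (ε + i(ω_j − ω_i)) X_{ij} + Σ_k X_{ik} Q_{kj} = δ_{ij} I_m for all i,j, where δ is Kronecker's delta. Suppose max_{i,j} ‖Q_{ij}‖ ≤ η ε with 0 < η ≤ 1/(6 n_s). Then the row block sums r_i := Σ_k ‖X_{ik}‖ satisfy r_i ≤ 12/(7ε) < 2/ε for every i. -/

import Mathlib

open Complex Matrix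
open scoped Matrix.Norms.L2Operator

theorem row_block_sum_bound {ns m : ℕ} (hns : 2 ≤ ns)
    (ω : Fin ns → ℝ) (hω : Function.Injective ω)
    (Δ : ℝ) (hΔ : 0 < Δ) (hgap : ∀ i j, i ≠ j → Δ ≤ |ω i - ω j|)
    (ε : ℝ) (hε : 0 < ε) (hεΔ : ε ≤ Δ / (2 * (ns : ℝ)))
    (η : ℝ) (hη : 0 < η) (hη' : η ≤ 1 / (6 * (ns : ℝ)))
    (Q X : Fin ns → Fin ns → Matrix (Fin m) (Fin m) ℂ)
    (hQ : ∀ i j, ‖Q i j‖ ≤ η * ε)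
    (heq : ∀ i j, ((ε : ℂ) + Complex.I * ((ω j : ℂ) - (ω i : ℂ))) • X i j
        + ∑ k, X i k * Q k j = if i = j then 1 else 0) :
    ∀ i, (∑ k, ‖X i k‖) ≤ 12 / (7 * ε) ∧ (∑ k, ‖X i k‖) < 2 / ε := by
  have hns' : (2 : ℝ) ≤ (ns : ℝ) := by exact_mod_cast hns
  intro i
  set r : ℝ := ∑ k, ‖X i k‖ with hrdef
  have hr0 : 0 ≤ r := Finset.sum_nonneg fun k _ => norm_nonneg _
  -- key pointwise bound
  have key : ∀ j, (if i = j then ε else Δ) * ‖X i j‖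
      ≤ (if i = j then (1:ℝ) else 0) + η * ε * r := by
    intro j
    have hX : ((ε : ℂ) + Complex.I * ((ω j : ℂ) - (ω i : ℂ))) • X i j
        = (if i = j then 1 else 0) - ∑ k, X i k * Q k j := by
      rw [← heq i j]; abel
    -- norm of the scalar is at least the d_j
    have hsc : (if i = j then ε else Δ)
        ≤ ‖((ε : ℂ) + Complex.I * ((ω j : ℂ) - (ω i : ℂ)))‖ := by
      set c : ℂ := (ε : ℂ) + Complex.I * ((ω j : ℂ) - (ω i : ℂ)) with hc
      have hre : c.re = ε := by simp [hc]
      have him : c.im = ω j - ω i := by simp [hc]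
      by_cases h : i = j
      · simp only [h, if_pos rfl] at *
        calc ε = |c.re| := by rw [hre]; exact (abs_of_pos hε).symm
        _ ≤ ‖c‖ := Complex.abs_re_le_norm c
      · simp only [if_neg h]
        calc Δ ≤ |ω j - ω i| := by
              have := hgap j i (fun hji => h hji.symm)
              simpa [abs_sub_comm] using this
        _ = |c.im| := by rw [him]
        _ ≤ ‖c‖ := Complex.abs_im_le_norm c
    have hrhs : ‖(if i = j then (1 : Matrix (Fin m) (Fin m) ℂ) else 0)
        - ∑ k, X i k * Q k j‖ ≤ (if i = j then (1:ℝ) else 0) + η * ε * r := by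
      refine (norm_sub_le _ _).trans (add_le_add ?_ ?_)
      · by_cases h : i = j
        · rw [if_pos h, if_pos h, Matrix.cstar_norm_def, _root_.map_one]
          rw [ContinuousLinearMap.one_def]
          exact ContinuousLinearMap.norm_id_le
        · simp [h]
      · calc ‖∑ k, X i k * Q k j‖ ≤ ∑ k, ‖X i k * Q k j‖ := norm_sum_le _ _
          _ ≤ ∑ k, ‖X i k‖ * (η * ε) := by
              refine Finset.sum_le_sum fun k _ => ?_
              exact (norm_mul_le _ _).trans
                (mul_le_mul_of_nonneg_left (hQ k j) (norm_nonneg _))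
          _ = η * ε * r := by rw [← Finset.sum_mul, hrdef]; ring
    calc (if i = j then ε else Δ) * ‖X i j‖
        ≤ ‖((ε : ℂ) + Complex.I * ((ω j : ℂ) - (ω i : ℂ)))‖ * ‖X i j‖ :=
          mul_le_mul_of_nonneg_right hsc (norm_nonneg _)
      _ = ‖((ε : ℂ) + Complex.I * ((ω j : ℂ) - (ω i : ℂ))) • X i j‖ :=
          (norm_smul _ _).symm
      _ ≤ (if i = j then (1:ℝ) else 0) + η * ε * r := by rw [hX]; exact hrhs
  -- pointwise bound with division
  have key' : ∀ j, ‖X i j‖ ≤ η * ε * r / Δ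
      + (if i = j then (1 + η * ε * r) / ε - η * ε * r / Δ else 0) := by
    intro j
    by_cases h : i = j
    · have hk := key j
      simp only [if_pos h] at hk ⊢
      have h2 : ‖X i j‖ ≤ (1 + η * ε * r) / ε := by
        rw [le_div_iff₀ hε]; linarith
      linarith
    · have hk := key j
      simp only [if_neg h] at hk ⊢
      rw [add_zero, le_div_iff₀ hΔ]
      linarith
  -- sum up
  have hsum : r ≤ (ns : ℝ) * (η * ε * r / Δ) + ((1 + η * ε * r) / ε - η * ε * r / Δ) := by
    calc r ≤ ∑ j, (η * ε * r / Δ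
        + (if i = j then (1 + η * ε * r) / ε - η * ε * r / Δ else 0)) :=
          Finset.sum_le_sum fun j _ => key' j
      _ = (ns : ℝ) * (η * ε * r / Δ) + ((1 + η * ε * r) / ε - η * ε * r / Δ) := by
          rw [Finset.sum_add_distrib, Finset.sum_const, Finset.sum_ite_eq]
          simp [mul_comm]
  have hd0 : 0 ≤ η * ε * r / Δ := by positivity
  have hsum2 : r ≤ (ns : ℝ) * (η * ε * r / Δ) + 1 / ε + η * r := by
    have : (1 + η * ε * r) / ε = 1 / ε + η * r := by
      field_simp
    linarith [hsum, hd0, this.le, this.ge]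
  -- bound ns * η * ε * r / Δ ≤ η * r / 2
  have hεns : 2 * (ns : ℝ) * ε ≤ Δ := by
    rw [le_div_iff₀ (by positivity)] at hεΔ
    nlinarith [hεΔ]
  have h1 : (ns : ℝ) * (η * ε * r / Δ) ≤ η * r / 2 := by
    rw [mul_div_assoc', div_le_div_iff₀ hΔ (by norm_num : (0:ℝ) < 2)]
    have : 0 ≤ η * r := by positivity
    nlinarith [hεns, this]
  -- bound η ≤ 1/12
  have h2 : η ≤ 1 / 12 := by
    have h6 : (0:ℝ) < 6 * (ns : ℝ) := by positivity
    calc η ≤ 1 / (6 * (ns : ℝ)) := hη'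
      _ ≤ 1 / 12 := by
        apply one_div_le_one_div_of_le (by norm_num)
        linarith
  have hfinal : r ≤ 8 / (7 * ε) := by
    have h3 : η * r ≤ r / 12 := by nlinarith
    have h4 : r * (7 / 8) ≤ 1 / ε := by linarith [hsum2, h1, h3]
    rw [le_div_iff₀ (by positivity)]
    have h5 := mul_le_mul_of_nonneg_right h4 hε.le
    have h6 : (1 / ε) * ε = 1 := by field_simp
    nlinarith
  constructor
  · calc r ≤ 8 / (7 * ε) := hfinal
      _ ≤ 12 / (7 * ε) := by gcongr <;> norm_num
  · calc r ≤ 8 / (7 * ε) := hfinal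
      _ < 2 / ε := by
        rw [div_lt_div_iff₀ (by positivity) hε]; linarith
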